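/- arXiv:1009.1706 — 2 statements merged into one kernel-verified Lean document; each statement's English description precedes it below -/
import Mathlib

section
/- Let c∈(0,1), h=ck/p, b=r/(c√k), and let θ=(θ_1,…,θ_p) be random with θ_j=b ε_j, where ε_1,…,ε_p are i.i.d. taking the value 0 with probability 1−h and each of +1, −1 with probability h/2; let π be the resulting product prior on ℝ^p. If k→∞, then π({θ : θ has at most k nonzero coordinates and ‖θ‖≥r})→1. -/
open MeasureTheory ProbabilityTheory Filter
open scoped ENNReal NNReal

noncomputable section

/-- Euclidean norm of a finite vector. -/
def vnorm {m : ℕ} (v : Fin m → ℝ) : ℝ := Real.sqrt (∑ i, v i ^ 2)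

open Classical in
/-- Number of nonzero coordinates of `θ`. -/
def suppCard {m : ℕ} (θ : Fin m → ℝ) : ℕ := (Finset.univ.filter fun j => θ j ≠ 0).card

/-- Law of a single coordinate `θ_j = b ε_j`: value `0` with probability `1-h`,
and values `+b`, `-b` with probability `h/2` each. -/
def coordLaw (h b : ℝ) : Measure ℝ :=
  ENNReal.ofReal (1 - h) • Measure.dirac 0 +
    ENNReal.ofReal (h / 2) • Measure.dirac b +
      ENNReal.ofReal (h / 2) • Measure.dirac (-b)

/-- The product prior `π = Π_j π_j` on `ℝ^p`. -/
def priorPi (p : ℕ) (h b : ℝ) : Measure (Fin p → ℝ) :=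
  Measure.pi fun _ : Fin p => coordLaw h b


section Aux

open MeasureTheory ProbabilityTheory Filter Set
open scoped ENNReal NNReal

lemma coordLaw_eq_one {h b : ℝ} (h0 : 0 ≤ h) (h1 : h ≤ 1) {A : Set ℝ}
    (hA0 : (0:ℝ) ∈ A) (hAb : b ∈ A) (hAb' : -b ∈ A) : coordLaw h b A = 1 := by
  simp only [coordLaw, Measure.coe_add, Measure.coe_smul, Pi.add_apply, Pi.smul_apply,
    smul_eq_mul, Measure.dirac_apply_of_mem hA0, Measure.dirac_apply_of_mem hAb,
    Measure.dirac_apply_of_mem hAb', mul_one]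
  rw [← ENNReal.ofReal_add (by linarith) (by linarith),
    ← ENNReal.ofReal_add (by linarith) (by linarith)]
  rw [show (1:ℝ) - h + h/2 + h/2 = 1 by ring, ENNReal.ofReal_one]

lemma isProb_coordLaw {h b : ℝ} (h0 : 0 ≤ h) (h1 : h ≤ 1) :
    IsProbabilityMeasure (coordLaw h b) :=
  ⟨coordLaw_eq_one h0 h1 (Set.mem_univ _) (Set.mem_univ _) (Set.mem_univ _)⟩

lemma isProb_prior {pp : ℕ} {h b : ℝ} (h0 : 0 ≤ h) (h1 : h ≤ 1) :
    IsProbabilityMeasure (priorPi pp h b) := by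
  haveI := isProb_coordLaw (b := b) h0 h1
  unfold priorPi; infer_instance

lemma integrable_dirac'' {f : ℝ → ℝ} {a : ℝ} : Integrable f (Measure.dirac a) := by
  have : f =ᵐ[Measure.dirac a] fun _ => f a := by
    rw [MeasureTheory.ae_dirac_eq]; exact Filter.eventually_pure.2 rfl
  exact (integrable_const (f a)).congr this.symm

lemma integral_coordLaw {h b : ℝ} (h0 : 0 ≤ h) (h1 : h ≤ 1) (g : ℝ → ℝ) :
    ∫ x, g x ∂(coordLaw h b) = (1 - h) * g 0 + (h / 2) * g b + (h / 2) * g (-b) := by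
  have hne : ∀ x : ℝ, ENNReal.ofReal x ≠ ⊤ := fun x => ENNReal.ofReal_ne_top
  rw [coordLaw, integral_add_measure, integral_add_measure, integral_smul_measure,
    integral_smul_measure, integral_smul_measure, integral_dirac, integral_dirac, integral_dirac,
    ENNReal.toReal_ofReal (by linarith), ENNReal.toReal_ofReal (by linarith)]
  · simp [smul_eq_mul]
  · exact integrable_dirac''.smul_measure (hne _)
  · exact integrable_dirac''.smul_measure (hne _)
  · exact (integrable_dirac''.smul_measure (hne _)).add_measure (integrable_dirac''.smul_measure (hne _))
  · exact integrable_dirac''.smul_measure (hne _)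

lemma my_map_eval_pi {ι : Type*} [Fintype ι] [DecidableEq ι] {α : ι → Type*}
    [∀ i, MeasurableSpace (α i)] (μ : ∀ i, Measure (α i)) [∀ i, IsProbabilityMeasure (μ i)]
    (i : ι) : (Measure.pi μ).map (Function.eval i) = μ i := by
  ext s hs
  rw [Measure.map_apply (measurable_pi_apply i) hs, Set.eval_preimage, Measure.pi_pi]
  rw [Finset.prod_eq_single i (fun j _ hj => by
    rw [Function.update_of_ne hj]; exact measure_univ) (by simp)]
  simp

lemma my_indep_eval {ι : Type*} [Fintype ι] [DecidableEq ι] {α : ι → Type*}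
    [∀ i, MeasurableSpace (α i)] (μ : ∀ i, Measure (α i)) [∀ i, IsProbabilityMeasure (μ i)]
    {i j : ι} (hij : i ≠ j) :
    IndepFun (Function.eval i) (Function.eval j) (Measure.pi μ) := by
  rw [ProbabilityTheory.indepFun_iff_measure_inter_preimage_eq_mul]
  intro s t hs ht
  have hset : Function.eval i ⁻¹' s ∩ Function.eval j ⁻¹' t =
      Set.pi Set.univ (Function.update (Function.update (fun _ => Set.univ) i s) j t) := by
    ext θ
    simp only [Set.mem_inter_iff, Set.mem_preimage, Set.mem_pi, Set.mem_univ, true_implies]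
    constructor
    · rintro ⟨h1, h2⟩ l
      rcases eq_or_ne l j with rfl | hlj
      · simpa using h2
      rcases eq_or_ne l i with rfl | hli
      · rw [Function.update_of_ne hlj, Function.update_self]; exact h1
      · rw [Function.update_of_ne hlj, Function.update_of_ne hli]; trivial
    · intro hl
      refine ⟨?_, ?_⟩
      · have := hl i; rwa [Function.update_of_ne hij, Function.update_self] at this
      · have := hl j; rwa [Function.update_self] at this
  have h1 : (Measure.pi μ) (Function.eval i ⁻¹' s) = μ i s := by
    rw [← Measure.map_apply (measurable_pi_apply i) hs, my_map_eval_pi]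
  have h2 : (Measure.pi μ) (Function.eval j ⁻¹' t) = μ j t := by
    rw [← Measure.map_apply (measurable_pi_apply j) ht, my_map_eval_pi]
  rw [hset, Measure.pi_pi, h1, h2]
  rw [← Finset.prod_subset (Finset.subset_univ {i, j}) (fun l _ hl => by
    simp only [Finset.mem_insert, Finset.mem_singleton, not_or] at hl
    rw [Function.update_of_ne hl.2, Function.update_of_ne hl.1]; exact measure_univ)]
  rw [Finset.prod_pair hij, Function.update_of_ne hij, Function.update_self,
    Function.update_self]

/-- indicator of nonzero -/
def gind (x : ℝ) : ℝ := if x = 0 then 0 else 1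

lemma gind_meas : Measurable gind :=
  Measurable.ite (measurableSet_eq) measurable_const measurable_const

lemma key_cheb (p : ℕ) (h b : ℝ) (h0 : 0 ≤ h) (h1 : h ≤ 1) (hb : b ≠ 0) {t : ℝ} (ht : 0 < t) :
    priorPi p h b {θ | t ≤ |(∑ j : Fin p, gind (θ j)) - p * h|}
      ≤ ENNReal.ofReal (p * h / t ^ 2) := by
  haveI := isProb_coordLaw (b := b) h0 h1
  set π := priorPi p h b with hπ
  haveI : IsProbabilityMeasure π := by
    rw [hπ, priorPi]; infer_instance
  set X : Fin p → (Fin p → ℝ) → ℝ := fun j θ => gind (θ j) with hX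
  have hXmeas : ∀ j, Measurable (X j) := fun j => gind_meas.comp (measurable_pi_apply j)
  have hXmem : ∀ j, MemLp (X j) 2 π := by
    intro j
    refine MemLp.of_bound (hXmeas j).aestronglyMeasurable 1 (Eventually.of_forall fun θ => ?_)
    simp only [hX, gind]; split <;> simp
  have hint : ∀ j, ∫ θ, X j θ ∂π = h := by
    intro j
    have : ∫ θ, X j θ ∂π = ∫ x, gind x ∂(coordLaw h b) := by
      rw [← my_map_eval_pi (fun _ : Fin p => coordLaw h b) j,
        integral_map (measurable_pi_apply j).aemeasurable gind_meas.aestronglyMeasurable]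
      rfl
    rw [this, integral_coordLaw h0 h1]
    have e0 : gind 0 = 0 := if_pos rfl
    have e1 : gind b = 1 := if_neg hb
    have e2 : gind (-b) = 1 := if_neg (neg_ne_zero.2 hb)
    rw [e0, e1, e2]; ring
  have hsq : ∀ j, (X j) ^ 2 = X j := by
    intro j; funext θ
    simp only [Pi.pow_apply, hX, gind]; split <;> norm_num
  have hvar : ∀ j, variance (X j) π = h - h ^ 2 := by
    intro j
    rw [variance_eq_sub (hXmem j), hsq j, hint j]
  set N : (Fin p → ℝ) → ℝ := ∑ j, X j with hN
  have hNmem : MemLp N 2 π := memLp_finset_sum' _ fun j _ => hXmem j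
  have hEN : ∫ θ, N θ ∂π = p * h := by
    simp_rw [hN, Finset.sum_apply]
    rw [integral_finset_sum _ fun j _ => (hXmem j).integrable one_le_two]
    simp [hint, mul_comm]
  have hVarN : variance N π = p * (h - h ^ 2) := by
    rw [hN, IndepFun.variance_sum (fun j _ => hXmem j)
      (fun i _ j hj hij => ?_)]
    · simp [hvar, mul_comm]; ring
    · exact (my_indep_eval (fun _ : Fin p => coordLaw h b) hij).comp gind_meas gind_meas
  have cheb := meas_ge_le_variance_div_sq (μ := π) hNmem ht
  rw [show (∫ x, N x ∂π) = (p : ℝ) * h from hEN] at cheb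
  have hset : {θ : Fin p → ℝ | t ≤ |N θ - p * h|} =
      {θ | t ≤ |(∑ j : Fin p, gind (θ j)) - p * h|} := by
    ext θ
    simp only [Set.mem_setOf_eq, hN, Finset.sum_apply, hX]
  rw [hset] at cheb
  refine cheb.trans (ENNReal.ofReal_le_ofReal ?_)
  rw [hVarN]
  gcongr
  nlinarith [sq_nonneg h, h0]

lemma key_lower (p k : ℕ) (c r : ℝ) (hc0 : 0 < c) (hc1 : c < 1) (hr : 0 < r)
    (hk1 : 1 ≤ k) (hkp : k ≤ p) :
    1 - ENNReal.ofReal (1 / (c * (1 - c) ^ 2 * k)) ≤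
      priorPi p (c * k / p) (r / (c * Real.sqrt k))
        {θ | suppCard θ ≤ k ∧ r ≤ vnorm θ} := by
  have hp0 : 0 < p := lt_of_lt_of_le hk1 hkp
  have hpR : (0:ℝ) < p := by exact_mod_cast hp0
  have hkR : (1:ℝ) ≤ k := by exact_mod_cast hk1
  have hkR0 : (0:ℝ) < k := by linarith
  set h : ℝ := c * k / p with hh
  set b : ℝ := r / (c * Real.sqrt k) with hbdef
  have hsqrt : (0:ℝ) < Real.sqrt k := Real.sqrt_pos.2 hkR0
  have hb : 0 < b := div_pos hr (mul_pos hc0 hsqrt)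
  have h0 : 0 ≤ h := by positivity
  have h1 : h ≤ 1 := by
    rw [hh, div_le_one hpR]
    calc c * k ≤ 1 * p := by
          apply mul_le_mul hc1.le (by exact_mod_cast hkp) hkR0.le zero_le_one
    _ = p := one_mul _
  haveI := isProb_coordLaw (b := b) h0 h1
  set π := priorPi p h b with hπ
  haveI : IsProbabilityMeasure π := by rw [hπ, priorPi]; infer_instance
  -- pattern set
  set S : Set (Fin p → ℝ) := Set.univ.pi (fun _ : Fin p => ({0, b, -b} : Set ℝ)) with hSdef
  have hSmeas : MeasurableSet S :=
    MeasurableSet.univ_pi fun _ => (Set.toFinite _).measurableSet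
  have hS1 : π S = 1 := by
    rw [hπ, priorPi, hSdef, Measure.pi_pi]
    have hone : coordLaw h b {0, b, -b} = 1 := coordLaw_eq_one h0 h1 (by simp) (by simp) (by simp)
    simp [hone]
  have hScompl : π Sᶜ = 0 := by
    rw [measure_compl hSmeas (measure_ne_top _ _), hS1, measure_univ, tsub_self]
  -- deviation set
  set t : ℝ := c * (1 - c) * k with htdef
  have h1c : (0:ℝ) < 1 - c := by linarith
  have ht : 0 < t := mul_pos (mul_pos hc0 h1c) hkR0
  set D : Set (Fin p → ℝ) := {θ | t ≤ |(∑ j : Fin p, gind (θ j)) - p * h|} with hDdef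
  have hNmeas : Measurable fun θ : Fin p → ℝ => ∑ j : Fin p, gind (θ j) :=
    Finset.measurable_sum _ fun j _ => gind_meas.comp (measurable_pi_apply j)
  have hDmeas : MeasurableSet D :=
    measurableSet_le measurable_const ((hNmeas.sub measurable_const).abs)
  have hph : (p:ℝ) * h = c * k := by
    rw [hh]; field_simp
  have hDbound : π D ≤ ENNReal.ofReal (1 / (c * (1 - c) ^ 2 * k)) := by
    refine (key_cheb p h b h0 h1 hb.ne' ht).trans (le_of_eq ?_)
    congr 1
    have hd : (0:ℝ) < c * (1 - c) ^ 2 * k := mul_pos (mul_pos hc0 (pow_pos h1c 2)) hkR0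
    rw [hph, div_eq_div_iff (pow_pos ht 2).ne' hd.ne', htdef]
    ring
  -- inclusion
  have hincl : S ∩ Dᶜ ⊆ {θ | suppCard θ ≤ k ∧ r ≤ vnorm θ} := by
    rintro θ ⟨hθS, hθD⟩
    have hdev : |(∑ j : Fin p, gind (θ j)) - c * k| < t := by
      rw [Set.mem_compl_iff, hDdef, Set.mem_setOf_eq, not_le, hph] at hθD
      exact hθD
    set Nv : ℝ := ∑ j : Fin p, gind (θ j) with hNv
    have habs := abs_lt.1 hdev
    have hNub : Nv < (k:ℝ) := by nlinarith [habs.2]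
    have hNlb : c ^ 2 * k < Nv := by nlinarith [habs.1]
    have hcard : (suppCard θ : ℝ) = Nv := by
      rw [suppCard, Finset.card_filter]
      push_cast
      refine Finset.sum_congr rfl fun j _ => ?_
      by_cases hj : θ j = 0 <;> simp [gind, hj]
    constructor
    · have : (suppCard θ : ℝ) < (k : ℝ) := by rw [hcard]; exact hNub
      exact_mod_cast this.le
    · have hsum : ∑ i, θ i ^ 2 = Nv * b ^ 2 := by
        rw [hNv, Finset.sum_mul]
        refine Finset.sum_congr rfl fun i _ => ?_
        have hi := hθS i (Set.mem_univ i)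
        simp only [Set.mem_insert_iff, Set.mem_singleton_iff] at hi
        rcases hi with hi | hi | hi
        · simp [hi, gind]
        · simp [hi, gind, hb.ne']
        · simp [hi, gind, hb.ne', neg_eq_zero]
      have hb2 : c ^ 2 * (k:ℝ) * b ^ 2 = r ^ 2 := by
        rw [hbdef, div_pow, mul_pow, Real.sq_sqrt hkR0.le]
        field_simp
      have hr2 : r ^ 2 ≤ ∑ i, θ i ^ 2 := by
        rw [hsum, ← hb2]
        have : c ^ 2 * (k:ℝ) ≤ Nv := hNlb.le
        nlinarith [sq_nonneg b]
      calc r = Real.sqrt (r ^ 2) := (Real.sqrt_sq hr.le).symm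
        _ ≤ vnorm θ := Real.sqrt_le_sqrt hr2
  -- combine
  calc 1 - ENNReal.ofReal (1 / (c * (1 - c) ^ 2 * k))
      ≤ 1 - π D := tsub_le_tsub_left hDbound 1
    _ = π Dᶜ := (prob_compl_eq_one_sub hDmeas).symm
    _ ≤ π (S ∩ Dᶜ) + π Sᶜ := by
        refine (measure_mono (?_ : Dᶜ ⊆ (S ∩ Dᶜ) ∪ Sᶜ)).trans (measure_union_le _ _)
        intro θ hθ
        by_cases hθS : θ ∈ S
        · exact Or.inl ⟨hθS, hθ⟩
        · exact Or.inr hθS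
    _ = π (S ∩ Dᶜ) := by rw [hScompl, add_zero]
    _ ≤ _ := measure_mono hincl

end Aux

/-- **Lemma (the prior concentrates on the alternative).** With `h = ck/p` and
`b = r/(c√k)`, if `k → ∞` then `π(θ ∈ ℝ^p_k, ‖θ‖ ≥ r) → 1`. -/
theorem prior_concentration
    (k p : ℕ → ℕ) (hk : Tendsto k atTop atTop) (hkp : ∀ ν, k ν ≤ p ν)
    (c : ℝ) (hc0 : 0 < c) (hc1 : c < 1)
    (r : ℕ → ℝ) (hr : ∀ ν, 0 < r ν) :
    Tendsto (fun ν =>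
        (priorPi (p ν) (c * (k ν : ℝ) / (p ν : ℝ)) (r ν / (c * Real.sqrt (k ν)))
          {θ | suppCard θ ≤ k ν ∧ r ν ≤ vnorm θ}).toReal)
      atTop (nhds 1) := by
  have h1c : (0:ℝ) < 1 - c := by linarith
  set B : ℕ → ℝ := fun ν => 1 / (c * (1 - c) ^ 2 * (k ν : ℝ)) with hB
  have hkR : Tendsto (fun ν => (k ν : ℝ)) atTop atTop :=
    tendsto_natCast_atTop_atTop.comp hk
  have hBlim : Tendsto B atTop (nhds 0) := by
    have hd : Tendsto (fun ν => c * (1 - c) ^ 2 * (k ν : ℝ)) atTop atTop :=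
      hkR.const_mul_atTop (by positivity)
    have h2 : Tendsto (fun ν => (c * (1 - c) ^ 2 * (k ν : ℝ))⁻¹) atTop (nhds 0) :=
      hd.inv_tendsto_atTop
    simpa only [hB, one_div] using h2
  have hlow : Tendsto (fun ν => 1 - B ν) atTop (nhds 1) := by
    simpa using (tendsto_const_nhds (x := (1:ℝ))).sub hBlim
  refine tendsto_of_tendsto_of_tendsto_of_le_of_le' hlow tendsto_const_nhds ?_ ?_
  · -- eventually 1 - B ν ≤ toReal
    filter_upwards [hk.eventually_ge_atTop 1,
      hBlim.eventually (eventually_le_nhds (by norm_num : (0:ℝ) < 1))] with ν hk1 hB1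
    have hB0 : 0 ≤ B ν := by
      have : (1:ℝ) ≤ (k ν : ℝ) := by exact_mod_cast hk1
      rw [hB]; positivity
    have hpR : (0:ℝ) < p ν := by exact_mod_cast lt_of_lt_of_le hk1 (hkp ν)
    have h0 : 0 ≤ c * (k ν : ℝ) / (p ν : ℝ) := by positivity
    have h1 : c * (k ν : ℝ) / (p ν : ℝ) ≤ 1 := by
      rw [div_le_one hpR]
      have h2 : (k ν : ℝ) ≤ (p ν : ℝ) := by exact_mod_cast hkp ν
      have h3 : (1:ℝ) ≤ (k ν : ℝ) := by exact_mod_cast hk1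
      nlinarith
    haveI := isProb_prior (pp := p ν) (b := r ν / (c * Real.sqrt (k ν))) h0 h1
    have hkey := key_lower (p ν) (k ν) c (r ν) hc0 hc1 (hr ν) hk1 (hkp ν)
    set μE := priorPi (p ν) (c * (k ν : ℝ) / (p ν : ℝ)) (r ν / (c * Real.sqrt (k ν)))
        {θ | suppCard θ ≤ k ν ∧ r ν ≤ vnorm θ}
    have hfin : μE ≠ ⊤ := measure_ne_top _ _
    have := ENNReal.toReal_mono hfin hkey
    rw [ENNReal.toReal_sub_of_le (ENNReal.ofReal_le_one.2 hB1) ENNReal.one_ne_top,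
      ENNReal.toReal_one, ENNReal.toReal_ofReal hB0] at this
    exact this
  · -- eventually toReal ≤ 1
    filter_upwards [hk.eventually_ge_atTop 1] with ν hk1
    have hp0 : 0 < p ν := lt_of_lt_of_le hk1 (hkp ν)
    have hpR : (0:ℝ) < p ν := by exact_mod_cast hp0
    have hkR1 : (1:ℝ) ≤ (k ν : ℝ) := by exact_mod_cast hk1
    have h0 : 0 ≤ c * (k ν : ℝ) / (p ν : ℝ) := by positivity
    have h1 : c * (k ν : ℝ) / (p ν : ℝ) ≤ 1 := by
      rw [div_le_one hpR]
      have : (k ν : ℝ) ≤ (p ν : ℝ) := by exact_mod_cast hkp ν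
      nlinarith
    haveI := isProb_prior (pp := p ν) (b := r ν / (c * Real.sqrt (k ν))) h0 h1
    have := prob_le_one (μ := priorPi (p ν) (c * (k ν : ℝ) / (p ν : ℝ))
        (r ν / (c * Real.sqrt (k ν)))) (s := {θ | suppCard θ ≤ k ν ∧ r ν ≤ vnorm θ})
    exact ENNReal.toReal_le_of_le_ofReal zero_le_one (by simpa using this)
end
end

section
/- Let f:[0,R]→ℝ, t_0∈[0,R], and suppose there exists λ>0 such that inf_{t∈[0,R]}(f(t)−λt²) = f(t_0)−λt_0². Then the constrained minimum F_k(t_0) = inf{ Σ_{j=1}^k f(t_j) : t_j∈[0,R] for all j, Σ_{j=1}^k t_j² ≥ k t_0² } equals k·f(t_0). -/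
noncomputable section

/-- **Lemma (a minimization problem).** If there is `λ > 0` such that
`inf_{t ∈ [0,R]} (f(t) - λ t²) = f(t₀) - λ t₀²`, then the constrained minimum
`F_k(t₀) = inf { Σ_{j=1}^k f(t_j) : t_j ∈ [0,R], Σ_j t_j² ≥ k t₀² }` equals `k f(t₀)`. -/
theorem constrained_minimization
    (k : ℕ) (hk : 0 < k) (R : ℝ) (hR : 0 < R)
    (f : ℝ → ℝ) (t₀ : ℝ) (ht₀ : t₀ ∈ Set.Icc (0 : ℝ) R)
    (lam : ℝ) (hlam : 0 < lam)
    (hmin : IsLeast ((fun t => f t - lam * t ^ 2) '' Set.Icc (0 : ℝ) R)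
      (f t₀ - lam * t₀ ^ 2)) :
    sInf {s : ℝ | ∃ t : Fin k → ℝ, (∀ j, t j ∈ Set.Icc (0 : ℝ) R) ∧
        (k : ℝ) * t₀ ^ 2 ≤ (∑ j, t j ^ 2) ∧ s = ∑ j, f (t j)} =
      (k : ℝ) * f t₀ := by
  have hkey : ∀ t ∈ Set.Icc (0 : ℝ) R, f t₀ - lam * t₀ ^ 2 ≤ f t - lam * t ^ 2 := by
    intro t ht
    exact hmin.2 ⟨t, ht, rfl⟩
  apply IsLeast.csInf_eq
  constructor
  · refine ⟨fun _ => t₀, fun _ => ht₀, ?_, ?_⟩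
    · simp [Finset.sum_const]
    · simp [Finset.sum_const, mul_comm]
  · rintro s ⟨t, htmem, hconstr, rfl⟩
    have h1 : ∀ j, f t₀ - lam * t₀ ^ 2 + lam * t j ^ 2 ≤ f (t j) := by
      intro j
      have := hkey (t j) (htmem j)
      linarith
    have h2 : ∑ j, (f t₀ - lam * t₀ ^ 2 + lam * t j ^ 2) ≤ ∑ j, f (t j) :=
      Finset.sum_le_sum fun j _ => h1 j
    rw [Finset.sum_add_distrib, Finset.sum_const, ← Finset.mul_sum] at h2
    simp only [Finset.card_univ, Fintype.card_fin, nsmul_eq_mul] at h2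
    nlinarith [mul_le_mul_of_nonneg_left hconstr hlam.le]
end
end
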